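/- On ℝ³ with coordinates (x,y,z), consider the Heisenberg frame X1 = ∂x + (y/2)∂z, X2 = ∂y − (x/2)∂z. Let g : ℝ → ℝ be C^∞ and define, on Ω = {(x,y,z) : (x,y) ≠ (0,0)}, r = √(x²+y²), f(x,y,z) = z − g(r), m = √((X1f)² + (X2f)²) = √(r²+4g'(r)²)/2, and F = 1/m (note ∂z f = 1, so F = X0f/‖∇_Hf‖ for X0 = ∂z). Let X_S act on smooth functions u by X_S(u) = ((X2f)·X1(u) − (X1f)·X2(u))/m. Then at every point of Ω: 2·X_S(F) − F² = 16·g'(r)·(r·g''(r) − g'(r)) / (r² + 4g'(r)²)². -/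

import Mathlib

noncomputable def Lx : ℝ × ℝ × ℝ →L[ℝ] ℝ := ContinuousLinearMap.fst ℝ ℝ (ℝ × ℝ)
noncomputable def Ly : ℝ × ℝ × ℝ →L[ℝ] ℝ :=
  (ContinuousLinearMap.fst ℝ ℝ ℝ).comp (ContinuousLinearMap.snd ℝ ℝ (ℝ × ℝ))
noncomputable def Lz : ℝ × ℝ × ℝ →L[ℝ] ℝ :=
  (ContinuousLinearMap.snd ℝ ℝ ℝ).comp (ContinuousLinearMap.snd ℝ ℝ (ℝ × ℝ))

@[simp] lemma Lx_apply (v : ℝ × ℝ × ℝ) : Lx v = v.1 := rfl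
@[simp] lemma Ly_apply (v : ℝ × ℝ × ℝ) : Ly v = v.2.1 := rfl
@[simp] lemma Lz_apply (v : ℝ × ℝ × ℝ) : Lz v = v.2.2 := rfl

noncomputable def rho (q : ℝ × ℝ × ℝ) : ℝ := Real.sqrt (q.1 ^ 2 + q.2.1 ^ 2)

lemma pos_of_ne (q : ℝ × ℝ × ℝ) (hq : (q.1, q.2.1) ≠ ((0:ℝ), (0:ℝ))) :
    0 < q.1 ^ 2 + q.2.1 ^ 2 := by
  have h : q.1 ≠ 0 ∨ q.2.1 ≠ 0 := by
    by_contra h; push_neg at h; exact hq (by simp [h.1, h.2])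
  rcases h with h | h
  · have := mul_self_pos.mpr h; nlinarith [sq_nonneg q.2.1]
  · have := mul_self_pos.mpr h; nlinarith [sq_nonneg q.1]

lemma rho_pos (q : ℝ × ℝ × ℝ) (hq : (q.1, q.2.1) ≠ ((0:ℝ), (0:ℝ))) : 0 < rho q :=
  Real.sqrt_pos.2 (pos_of_ne q hq)

lemma rho_sq (q : ℝ × ℝ × ℝ) (hq : (q.1, q.2.1) ≠ ((0:ℝ), (0:ℝ))) :
    rho q ^ 2 = q.1 ^ 2 + q.2.1 ^ 2 :=
  Real.sq_sqrt (pos_of_ne q hq).le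

lemma rho_hasFDerivAt (q : ℝ × ℝ × ℝ) (hq : 0 < q.1 ^ 2 + q.2.1 ^ 2) :
    HasFDerivAt rho ((q.1 / rho q) • Lx + (q.2.1 / rho q) • Ly) q := by
  have hx : HasFDerivAt (fun v : ℝ × ℝ × ℝ => v.1) Lx q := hasFDerivAt_fst
  have hy : HasFDerivAt (fun v : ℝ × ℝ × ℝ => v.2.1) Ly q :=
    hasFDerivAt_fst.comp q hasFDerivAt_snd
  have h1 : HasFDerivAt (fun v : ℝ × ℝ × ℝ => v.1 ^ 2 + v.2.1 ^ 2)
      ((q.1 • Lx + q.1 • Lx) + (q.2.1 • Ly + q.2.1 • Ly)) q := by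
    have h1' : (fun v : ℝ × ℝ × ℝ => v.1 ^ 2 + v.2.1 ^ 2)
        = fun v => v.1 * v.1 + v.2.1 * v.2.1 := by ext v; ring
    rw [h1']
    exact (hx.mul hx).add (hy.mul hy)
  have h2 := (Real.hasDerivAt_sqrt hq.ne').comp_hasFDerivAt q h1
  have hρ0 : (0:ℝ) < rho q := by simp only [rho]; positivity
  have hρ : rho q = Real.sqrt (q.1 ^ 2 + q.2.1 ^ 2) := rfl
  refine h2.congr_fderiv ?_
  refine ContinuousLinearMap.ext fun v => ?_
  simp only [ContinuousLinearMap.add_apply, ContinuousLinearMap.smul_apply, Lx_apply, Ly_apply,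
    smul_eq_mul, ← hρ]
  field_simp
  ring

set_option maxHeartbeats 1000000 in
/-- the integrand of the third Steiner coefficient for the rotational
surface `{z = g(√(x²+y²))}` in the Heisenberg group: with `f(x,y,z) = z − g(r)`,
`m = √((X1f)² + (X2f)²) = √(r²+4g'(r)²)/2`, `F = 1/m`, and
`X_S(u) = ((X2f)·X1(u) − (X1f)·X2(u))/m`, one has
`2·X_S(F) − F² = 16·g'(r)·(r·g''(r) − g'(r))/(r² + 4g'(r)²)²`. -/
theorem rotational_surface_heisenberg_a3_integrand
    (g : ℝ → ℝ) (hg : ContDiff ℝ (⊤ : ℕ∞) g)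
    (X1 X2 : ℝ × ℝ × ℝ → ℝ × ℝ × ℝ)
    (hX1 : X1 = fun p => (1, 0, p.2.1 / 2))
    (hX2 : X2 = fun p => (0, 1, -(p.1 / 2)))
    (f : ℝ × ℝ × ℝ → ℝ)
    (hf : f = fun p => p.2.2 - g (Real.sqrt (p.1 ^ 2 + p.2.1 ^ 2)))
    (X1f X2f m F : ℝ × ℝ × ℝ → ℝ)
    (hX1f : X1f = fun q => fderiv ℝ f q (X1 q))
    (hX2f : X2f = fun q => fderiv ℝ f q (X2 q))
    (hm : m = fun q => Real.sqrt ((X1f q) ^ 2 + (X2f q) ^ 2))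
    (hF : F = fun q => 1 / m q)
    (p : ℝ × ℝ × ℝ) (hp : (p.1, p.2.1) ≠ ((0 : ℝ), (0 : ℝ)))
    (r : ℝ) (hr : r = Real.sqrt (p.1 ^ 2 + p.2.1 ^ 2)) :
    m p = Real.sqrt (r ^ 2 + 4 * (deriv g r) ^ 2) / 2 ∧
    2 * ((X2f p * fderiv ℝ F p (X1 p) - X1f p * fderiv ℝ F p (X2 p)) / m p)
        - (F p) ^ 2
      = 16 * deriv g r * (r * deriv (deriv g) r - deriv g r)
          / (r ^ 2 + 4 * (deriv g r) ^ 2) ^ 2 := by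
  -- smoothness of g and its derivatives
  have hg1 : Differentiable ℝ g := hg.differentiable (by simp)
  have hgd : ContDiff ℝ (⊤ : ℕ∞) (deriv g) := (contDiff_infty_iff_deriv.mp hg).2
  have hg2 : Differentiable ℝ (deriv g) := hgd.differentiable (by simp)
  -- derivative of f on Ω
  have hDf : ∀ q : ℝ × ℝ × ℝ, (q.1, q.2.1) ≠ ((0:ℝ), (0:ℝ)) →
      HasFDerivAt f (Lz - deriv g (rho q) • ((q.1 / rho q) • Lx + (q.2.1 / rho q) • Ly)) q := by
    intro q hq
    have hz : HasFDerivAt (fun v : ℝ × ℝ × ℝ => v.2.2) Lz q :=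
      hasFDerivAt_snd.comp q hasFDerivAt_snd
    have hgr : HasFDerivAt (g ∘ rho)
        (deriv g (rho q) • ((q.1 / rho q) • Lx + (q.2.1 / rho q) • Ly)) q :=
      ((hg1 (rho q)).hasDerivAt).comp_hasFDerivAt q (rho_hasFDerivAt q (pos_of_ne q hq))
    have : f = fun v => v.2.2 - (g ∘ rho) v := by rw [hf]; rfl
    rw [this]
    exact hz.sub hgr
  -- formulas for X1f, X2f on Ω
  have hX1f' : ∀ q : ℝ × ℝ × ℝ, (q.1, q.2.1) ≠ ((0:ℝ), (0:ℝ)) →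
      X1f q = q.2.1 / 2 - deriv g (rho q) * q.1 / rho q := by
    intro q hq
    rw [hX1f]
    simp only [(hDf q hq).fderiv, hX1, ContinuousLinearMap.sub_apply,
      ContinuousLinearMap.smul_apply, ContinuousLinearMap.add_apply, Lx_apply, Ly_apply,
      Lz_apply, smul_eq_mul]
    have := (rho_pos q hq).ne'
    field_simp
    ring
  have hX2f' : ∀ q : ℝ × ℝ × ℝ, (q.1, q.2.1) ≠ ((0:ℝ), (0:ℝ)) →
      X2f q = -(q.1 / 2) - deriv g (rho q) * q.2.1 / rho q := by
    intro q hq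
    rw [hX2f]
    simp only [(hDf q hq).fderiv, hX2, ContinuousLinearMap.sub_apply,
      ContinuousLinearMap.smul_apply, ContinuousLinearMap.add_apply, Lx_apply, Ly_apply,
      Lz_apply, smul_eq_mul]
    have := (rho_pos q hq).ne'
    field_simp
    ring
  -- formula for m on Ω
  have hm' : ∀ q : ℝ × ℝ × ℝ, (q.1, q.2.1) ≠ ((0:ℝ), (0:ℝ)) →
      m q = Real.sqrt ((deriv g (rho q)) ^ 2 + (rho q) ^ 2 / 4) := by
    intro q hq
    simp only [hm]
    rw [hX1f' q hq, hX2f' q hq]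
    congr 1
    have hs := rho_sq q hq
    have h0 := (rho_pos q hq).ne'
    field_simp
    linear_combination (-4 * (rho q ^ 2 + 4 * (deriv g (rho q)) ^ 2)) * hs
  -- basic facts at p
  have hrp : rho p = r := hr.symm
  have hrpos : 0 < r := hrp ▸ rho_pos p hp
  have hxy : p.1 ^ 2 + p.2.1 ^ 2 = r ^ 2 := by rw [← hrp]; exact (rho_sq p hp).symm
  set a := deriv g r with ha
  set b := deriv (deriv g) r with hb
  have hwpos : 0 < a ^ 2 + r ^ 2 / 4 := by nlinarith [sq_nonneg a]
  set t := Real.sqrt (a ^ 2 + r ^ 2 / 4) with htdef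
  have htpos : 0 < t := Real.sqrt_pos.2 hwpos
  have htne : t ≠ 0 := htpos.ne'
  have ht2 : t ^ 2 = a ^ 2 + r ^ 2 / 4 := Real.sq_sqrt hwpos.le
  clear_value a b t
  -- m p and F p
  have hmp : m p = t := by rw [hm' p hp, hrp, ← ha, htdef]
  have hFp : F p = 1 / t := by simp only [hF]; rw [hmp]
  -- first conjunct
  have hconj1 : m p = Real.sqrt (r ^ 2 + 4 * a ^ 2) / 2 := by
    rw [hmp, htdef, show a ^ 2 + r ^ 2 / 4 = (r ^ 2 + 4 * a ^ 2) * (1 / 2) ^ 2 by ring,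
      Real.sqrt_mul (by positivity), Real.sqrt_sq (by norm_num)]
    ring
  -- eventual formula for F near p
  have hΩ : IsOpen {q : ℝ × ℝ × ℝ | (q.1, q.2.1) ≠ ((0:ℝ), (0:ℝ))} := by
    exact isOpen_compl_singleton.preimage (continuous_fst.prodMk (continuous_fst.comp continuous_snd))
  have hFeq : F =ᶠ[nhds p]
      fun q => (Real.sqrt ((deriv g (rho q)) ^ 2 + (rho q) ^ 2 / 4))⁻¹ := by
    filter_upwards [hΩ.mem_nhds hp] with q hq
    simp only [hF]
    rw [hm' q hq, one_div]
  -- derivative of the radial profile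
  obtain ⟨c, hc⟩ : ∃ c : ℝ, c = -(1 / (2 * t) * (2 * a * b + r / 2)) / t ^ 2 := ⟨_, rfl⟩
  have hw : HasDerivAt (fun s : ℝ => (deriv g s) ^ 2 + s ^ 2 / 4) (2 * a * b + r / 2) r := by
    have h1 : HasDerivAt (fun s : ℝ => (deriv g s) ^ 2) (2 * a * b) r := by
      have h := ((hg2 r).hasDerivAt.mul (hg2 r).hasDerivAt)
      have he : (fun s : ℝ => (deriv g s) ^ 2) = fun s => deriv g s * deriv g s := by
        ext s; ring
      rw [he]
      exact h.congr_deriv (by rw [ha, hb]; ring)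
    have h2 : HasDerivAt (fun s : ℝ => s ^ 2 / 4) (r / 2) r := by
      have h := (hasDerivAt_pow 2 r).div_const 4
      exact h.congr_deriv (by norm_num; ring)
    exact h1.add h2
  have hinv : HasDerivAt (fun s : ℝ => (Real.sqrt ((deriv g s) ^ 2 + s ^ 2 / 4))⁻¹) c r := by
    have hwpos' : 0 < (deriv g r) ^ 2 + r ^ 2 / 4 := by rw [← ha]; exact hwpos
    have hs := (Real.hasDerivAt_sqrt hwpos'.ne').comp r hw
    have h2 := hs.inv (by
      simp only [Function.comp_apply]
      rw [← ha, ← htdef]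
      exact htne)
    have h3 : HasDerivAt (fun s : ℝ => (Real.sqrt ((deriv g s) ^ 2 + s ^ 2 / 4))⁻¹)
        (-(1 / (2 * Real.sqrt ((deriv g r) ^ 2 + r ^ 2 / 4)) * (2 * a * b + r / 2)) /
          (((fun x => Real.sqrt x) ∘ fun s => (deriv g s) ^ 2 + s ^ 2 / 4) r) ^ 2) r := h2
    rw [hc]
    convert h3 using 1
    simp only [Function.comp_apply]
    rw [htdef, ha]
  -- full derivative of F at p
  have hrhoD := rho_hasFDerivAt p (pos_of_ne p hp)
  rw [hrp] at hrhoD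
  rw [← hrp] at hinv
  have hcomp := hinv.comp_hasFDerivAt p hrhoD
  have hFD : HasFDerivAt F (c • ((p.1 / r) • Lx + (p.2.1 / r) • Ly)) p :=
    HasFDerivAt.congr_of_eventuallyEq hcomp hFeq
  have hD1 : fderiv ℝ F p (X1 p) = c * (p.1 / r) := by
    rw [hFD.fderiv, hX1]
    simp only [ContinuousLinearMap.smul_apply, ContinuousLinearMap.add_apply, Lx_apply, Ly_apply,
      smul_eq_mul]
    ring
  have hD2 : fderiv ℝ F p (X2 p) = c * (p.2.1 / r) := by
    rw [hFD.fderiv, hX2]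
    simp only [ContinuousLinearMap.smul_apply, ContinuousLinearMap.add_apply, Lx_apply, Ly_apply,
      smul_eq_mul]
    ring
  refine ⟨hconj1, ?_⟩
  rw [hD1, hD2, hX1f' p hp, hX2f' p hp, hrp, hmp, hFp, ← ha]
  have hrne := hrpos.ne'
  have hnum : (-(p.1 / 2) - a * p.2.1 / r) * (c * (p.1 / r))
      - (p.2.1 / 2 - a * p.1 / r) * (c * (p.2.1 / r)) = c * -(r / 2) := by
    field_simp
    linear_combination (-(c * r)) * hxy
  rw [hnum]
  have ht4 : t ^ 4 = (a ^ 2 + r ^ 2 / 4) ^ 2 := by rw [← ht2]; ring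
  have hstep : 2 * (c * -(r / 2) / t) - (1 / t) ^ 2
      = (2 * a * b + r / 2) * r / (2 * t ^ 4) - 1 / t ^ 2 := by
    rw [hc]; field_simp
  rw [hstep, ht4, ht2]
  have h4 : r ^ 2 + 4 * a ^ 2 ≠ 0 := by nlinarith
  have h5 : a ^ 2 + r ^ 2 / 4 ≠ 0 := hwpos.ne'
  field_simp
  ring
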